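/- Let s ≥ 2 and k ≥ 1 be integers, let θ be a bijection of the k-blocks (Fin k → Fin s) with θ (fun _ => 0) ≠ (fun _ => s − 1), and let F : ℝ → ℝ satisfy: for every admissible digit sequence a, F(∑_{n=0}^∞ a n / s^{n+1}) = ∑_{n=0}^∞ (Θ a) n / s^{n+1}. Suppose θ has exactly one fixed block σ (θ σ = σ and every block b with θ b = b equals σ), and σ is not the constant block s − 1. Then the set of invariant points of F in [0,1) is the singleton { x ∈ [0,1) : F x = x } = { ∑_{n=0}^∞ σ(n mod k) / s^{n+1} }, the number whose s-adic expansion is the periodic repetition of the block σ. (Paper's Lemma 8, second case.) -/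

import Mathlib

namespace Stmt9

variable {s : ℕ}

lemma one_lt_sR (hs : 2 ≤ s) : (1:ℝ) < (s:ℝ) := by exact_mod_cast (by omega : 1 < s)

lemma inv_sR_lt_one (hs : 2 ≤ s) : ((s:ℝ))⁻¹ < 1 := by
  have := one_lt_sR hs
  rw [inv_lt_one_iff₀]; right; exact this

lemma summable_aux (hs : 2 ≤ s) (c : ℕ → ℕ) (hc : ∀ n, c n < s) :
    Summable (fun n => ((c n : ℝ)) / (s:ℝ)^(n+1)) := by
  have h1 : (1:ℝ) < s := one_lt_sR hs
  have h0 : (0:ℝ) < s := by linarith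
  have hg : Summable (fun n : ℕ => ((s:ℝ)⁻¹)^n) :=
    summable_geometric_of_lt_one (by positivity) (inv_sR_lt_one hs)
  refine Summable.of_nonneg_of_le (fun n => by positivity) (fun n => ?_) hg
  rw [div_le_iff₀ (by positivity)]
  have key : ((s:ℝ)⁻¹)^n * (s:ℝ)^(n+1) = s := by
    rw [pow_succ, inv_pow, ← mul_assoc, inv_mul_cancel₀ (by positivity), one_mul]
  rw [key]
  exact_mod_cast (hc n).le

lemma tsum_const_tail (hs : 2 ≤ s) (N : ℕ) :
    ∑' n : ℕ, ((s - 1 : ℕ) : ℝ) / (s:ℝ)^((n + N) + 1) = ((s:ℝ)^N)⁻¹ := by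
  have h1 : (1:ℝ) < s := one_lt_sR hs
  have h0 : (0:ℝ) < s := by linarith
  have hsn : (s:ℝ) ≠ 0 := by linarith
  have hs1 : (s:ℝ) - 1 ≠ 0 := by linarith
  have hterm : ∀ n : ℕ, ((s - 1 : ℕ) : ℝ) / (s:ℝ)^((n + N) + 1)
      = (((s:ℝ) - 1) / (s:ℝ)^(N+1)) * ((s:ℝ)⁻¹)^n := by
    intro n
    have hp : (s:ℝ)^((n + N) + 1) = (s:ℝ)^(N+1) * (s:ℝ)^n := by
      rw [← pow_add]; ring_nf
    rw [hp, Nat.cast_sub (by omega), inv_pow, ← div_eq_mul_inv, div_div]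
    norm_num
  rw [tsum_congr hterm, tsum_mul_left,
    tsum_geometric_of_lt_one (by positivity) (inv_sR_lt_one hs)]
  have h2 : 1 - (s:ℝ)⁻¹ = ((s:ℝ) - 1)/s := by field_simp
  rw [h2, inv_div]
  have h3 : ((s:ℝ) - 1) / (s:ℝ)^(N+1) * ((s:ℝ) / ((s:ℝ) - 1))
      = (s:ℝ) / (s:ℝ)^(N+1) * (((s:ℝ)-1)/((s:ℝ)-1)) := by ring
  rw [h3, div_self hs1, mul_one, pow_succ, mul_comm ((s:ℝ)^N) (s:ℝ), ← div_div,
    div_self hsn, one_div]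


lemma summable_tail (hs : 2 ≤ s) (c : ℕ → ℕ) (hc : ∀ n, c n < s) (N : ℕ) :
    Summable (fun n => ((c (n + N) : ℝ)) / (s:ℝ)^((n + N)+1)) :=
  (summable_aux hs c hc).comp_injective (add_left_injective N)

lemma sum_split (hs : 2 ≤ s) (c : ℕ → ℕ) (hc : ∀ n, c n < s) (N : ℕ) :
    ∑' n : ℕ, ((c n : ℝ)) / (s:ℝ)^(n+1)
      = (∑ n ∈ Finset.range N, ((c n : ℝ)) / (s:ℝ)^(n+1))
        + ∑' n : ℕ, ((c (n + N) : ℝ)) / (s:ℝ)^((n + N)+1) :=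
  (Summable.sum_add_tsum_nat_add N (summable_aux hs c hc)).symm

lemma tail_lt (hs : 2 ≤ s) (c : ℕ → ℕ) (hc : ∀ n, c n < s) (N : ℕ)
    (h : ∃ m, N ≤ m ∧ c m ≠ s - 1) :
    ∑' n : ℕ, ((c (n + N) : ℝ)) / (s:ℝ)^((n + N)+1) < ((s:ℝ)^N)⁻¹ := by
  obtain ⟨m, hm, hne⟩ := h
  rw [← tsum_const_tail hs N]
  refine Summable.tsum_lt_tsum_of_nonneg (i := m - N) (fun n => by positivity) (fun n => ?_) ?_ ?_
  · have hb : (c (n + N) : ℝ) ≤ ((s - 1 : ℕ) : ℝ) := by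
      exact_mod_cast (by have := hc (n + N); omega : c (n + N) ≤ s - 1)
    exact (div_le_div_iff_of_pos_right (by positivity)).mpr hb
  · have him : m - N + N = m := Nat.sub_add_cancel hm
    rw [him]
    have hb : (c m : ℝ) < ((s - 1 : ℕ) : ℝ) := by
      have h2 : c m < s - 1 := Nat.lt_of_le_of_ne (Nat.le_pred_of_lt (hc m)) hne
      exact_mod_cast h2
    exact (div_lt_div_iff_of_pos_right (by positivity)).mpr hb
  · exact summable_tail hs (fun _ => s - 1) (fun _ => Nat.sub_lt (by omega) one_pos) N


lemma tail_le (hs : 2 ≤ s) (c : ℕ → ℕ) (hc : ∀ n, c n < s) (N : ℕ) :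
    ∑' n : ℕ, ((c (n + N) : ℝ)) / (s:ℝ)^((n + N)+1) ≤ ((s:ℝ)^N)⁻¹ := by
  rw [← tsum_const_tail hs N]
  refine Summable.tsum_le_tsum (fun n => ?_) (summable_tail hs c hc N)
    (summable_tail hs (fun _ => s - 1) (fun _ => Nat.sub_lt (by omega) one_pos) N)
  have hb : (c (n + N) : ℝ) ≤ ((s - 1 : ℕ) : ℝ) := by
    exact_mod_cast (by have := hc (n + N); omega : c (n + N) ≤ s - 1)
  exact (div_le_div_iff_of_pos_right (by positivity)).mpr hb

/-- Admissibility phrased positively. -/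
lemma adm_iff (c : ℕ → ℕ) :
    (¬ ∃ N, ∀ n ≥ N, c n = s - 1) ↔ ∀ N, ∃ m, N ≤ m ∧ c m ≠ s - 1 := by
  push_neg
  constructor
  · intro h N; obtain ⟨m, hm, h2⟩ := h N; exact ⟨m, hm, h2⟩
  · intro h N; obtain ⟨m, hm, h2⟩ := h N; exact ⟨m, hm, h2⟩

lemma sum_lt_one (hs : 2 ≤ s) (c : ℕ → ℕ) (hc : ∀ n, c n < s)
    (hadm : ¬ ∃ N, ∀ n ≥ N, c n = s - 1) :
    ∑' n : ℕ, ((c n : ℝ)) / (s:ℝ)^(n+1) < 1 := by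
  have h := tail_lt hs c hc 0 ((adm_iff c).mp hadm 0)
  simpa using h

lemma sum_nonneg' (c : ℕ → ℕ) : (0:ℝ) ≤ ∑' n : ℕ, ((c n : ℝ)) / (s:ℝ)^(n+1) :=
  tsum_nonneg (fun n => by positivity)

lemma sum_lt_sum (hs : 2 ≤ s) (a b : ℕ → ℕ) (ha : ∀ n, a n < s) (hb : ∀ n, b n < s)
    (haadm : ¬ ∃ N, ∀ n ≥ N, a n = s - 1) (N : ℕ)
    (hpre : ∀ n < N, a n = b n) (hN : a N < b N) :
    ∑' n : ℕ, ((a n : ℝ)) / (s:ℝ)^(n+1) < ∑' n : ℕ, ((b n : ℝ)) / (s:ℝ)^(n+1) := by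
  have h0 : (0:ℝ) < s := by positivity
  rw [sum_split hs a ha (N+1), sum_split hs b hb (N+1)]
  have hhead : ∀ g : ℕ → ℕ, ∑ n ∈ Finset.range (N+1), ((g n : ℝ)) / (s:ℝ)^(n+1)
      = (∑ n ∈ Finset.range N, ((g n : ℝ)) / (s:ℝ)^(n+1)) + (g N : ℝ) / (s:ℝ)^(N+1) :=
    fun g => Finset.sum_range_succ _ N
  rw [hhead a, hhead b]
  have hH : ∑ n ∈ Finset.range N, ((a n : ℝ)) / (s:ℝ)^(n+1)
      = ∑ n ∈ Finset.range N, ((b n : ℝ)) / (s:ℝ)^(n+1) := by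
    refine Finset.sum_congr rfl (fun n hn => ?_)
    rw [hpre n (Finset.mem_range.mp hn)]
  have hta : ∑' n : ℕ, ((a (n + (N+1)) : ℝ)) / (s:ℝ)^((n + (N+1))+1) < ((s:ℝ)^(N+1))⁻¹ :=
    tail_lt hs a ha (N+1) ((adm_iff a).mp haadm (N+1))
  have htb : (0:ℝ) ≤ ∑' n : ℕ, ((b (n + (N+1)) : ℝ)) / (s:ℝ)^((n + (N+1))+1) :=
    tsum_nonneg (fun n => by positivity)
  have hstep : (a N : ℝ) / (s:ℝ)^(N+1) + ((s:ℝ)^(N+1))⁻¹ ≤ (b N : ℝ) / (s:ℝ)^(N+1) := by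
    have h1 : ((a N : ℝ) + 1) ≤ (b N : ℝ) := by exact_mod_cast hN
    rw [← one_div, ← add_div]
    exact (div_le_div_iff_of_pos_right (by positivity)).mpr h1
  linarith [hH, hta, htb, hstep]


lemma eq_of_sum_eq (hs : 2 ≤ s) (a b : ℕ → ℕ) (ha : ∀ n, a n < s) (hb : ∀ n, b n < s)
    (haadm : ¬ ∃ N, ∀ n ≥ N, a n = s - 1) (hbadm : ¬ ∃ N, ∀ n ≥ N, b n = s - 1)
    (h : ∑' n : ℕ, ((a n : ℝ)) / (s:ℝ)^(n+1) = ∑' n : ℕ, ((b n : ℝ)) / (s:ℝ)^(n+1)) :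
    a = b := by
  by_contra hne
  have hex : ∃ n, a n ≠ b n := Function.ne_iff.mp hne
  set N := Nat.find hex with hNdef
  have hN : a N ≠ b N := Nat.find_spec hex
  have hpre : ∀ n < N, a n = b n := fun n hn => not_not.mp (Nat.find_min hex hn)
  rcases lt_or_gt_of_ne hN with h' | h'
  · exact absurd h (ne_of_lt (sum_lt_sum hs a b ha hb haadm N hpre h'))
  · exact absurd h.symm
      (ne_of_lt (sum_lt_sum hs b a hb ha hbadm N (fun n hn => (hpre n hn).symm) h'))

/-! ### digit expansion -/

noncomputable def dig (s : ℕ) (x : ℝ) (n : ℕ) : ℕ :=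
  (⌊x * (s:ℝ)^(n+1)⌋ - s * ⌊x * (s:ℝ)^n⌋).toNat

lemma dig_spec (hs : 2 ≤ s) {x : ℝ} (hx0 : 0 ≤ x) (n : ℕ) :
    (dig s x n : ℤ) = ⌊x * (s:ℝ)^(n+1)⌋ - s * ⌊x * (s:ℝ)^n⌋ ∧ dig s x n < s := by
  have h0 : (0:ℝ) < s := by positivity
  have h1 : (s:ℤ) * ⌊x * (s:ℝ)^n⌋ ≤ ⌊x * (s:ℝ)^(n+1)⌋ := by
    rw [Int.le_floor]
    push_cast
    calc ((s:ℝ)) * ⌊x * (s:ℝ)^n⌋ ≤ s * (x * (s:ℝ)^n) := by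
          have := Int.floor_le (x * (s:ℝ)^n)
          nlinarith
      _ = x * (s:ℝ)^(n+1) := by ring
  have h2 : ⌊x * (s:ℝ)^(n+1)⌋ < (s:ℤ) * ⌊x * (s:ℝ)^n⌋ + s := by
    rw [Int.floor_lt]
    push_cast
    have hfl := Int.lt_floor_add_one (x * (s:ℝ)^n)
    calc x * (s:ℝ)^(n+1) = (s:ℝ) * (x * (s:ℝ)^n) := by ring
      _ < (s:ℝ) * ((⌊x * (s:ℝ)^n⌋:ℝ) + 1) := by
          exact mul_lt_mul_of_pos_left hfl h0
      _ = (s:ℝ) * (⌊x * (s:ℝ)^n⌋:ℝ) + s := by ring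
  constructor
  · rw [dig, Int.toNat_of_nonneg (by omega)]
  · have : (dig s x n : ℤ) < s := by
      rw [dig, Int.toNat_of_nonneg (by omega)]; omega
    exact_mod_cast this

lemma dig_lt (hs : 2 ≤ s) {x : ℝ} (hx0 : 0 ≤ x) (n : ℕ) : dig s x n < s :=
  (dig_spec hs hx0 n).2

lemma dig_partial (hs : 2 ≤ s) {x : ℝ} (hx0 : 0 ≤ x) (hx1 : x < 1) (N : ℕ) :
    ∑ n ∈ Finset.range N, ((dig s x n : ℝ)) / (s:ℝ)^(n+1)
      = (⌊x * (s:ℝ)^N⌋ : ℝ) / (s:ℝ)^N := by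
  have h0 : (0:ℝ) < s := by positivity
  induction N with
  | zero => simp [Int.floor_eq_zero_iff.mpr ⟨hx0, hx1⟩]
  | succ N ih =>
    rw [Finset.sum_range_succ, ih]
    have hd : (⌊x * (s:ℝ)^(N+1)⌋ : ℝ) = (s:ℝ) * (⌊x * (s:ℝ)^N⌋:ℝ) + (dig s x N : ℝ) := by
      have := (dig_spec hs hx0 N).1
      have h' : (⌊x * (s:ℝ)^(N+1)⌋ : ℤ) = s * ⌊x * (s:ℝ)^N⌋ + (dig s x N : ℤ) := by omega
      exact_mod_cast h'
    rw [hd]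
    field_simp
    ring

lemma dig_hasSum (hs : 2 ≤ s) {x : ℝ} (hx0 : 0 ≤ x) (hx1 : x < 1) :
    HasSum (fun n => ((dig s x n : ℝ)) / (s:ℝ)^(n+1)) x := by
  have h0 : (0:ℝ) < s := by positivity
  have h1 : (1:ℝ) < s := one_lt_sR hs
  rw [hasSum_iff_tendsto_nat_of_nonneg (fun n => by positivity)]
  have heq : (fun N => ∑ n ∈ Finset.range N, ((dig s x n : ℝ)) / (s:ℝ)^(n+1))
      = fun N => (⌊x * (s:ℝ)^N⌋ : ℝ) / (s:ℝ)^N := funext (dig_partial hs hx0 hx1)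
  rw [heq]
  have hlow : Filter.Tendsto (fun N : ℕ => x - ((s:ℝ)⁻¹)^N) Filter.atTop (nhds x) := by
    have := tendsto_pow_atTop_nhds_zero_of_lt_one (by positivity : (0:ℝ) ≤ (s:ℝ)⁻¹)
      (inv_sR_lt_one hs)
    simpa using Filter.Tendsto.const_sub x this
  refine tendsto_of_tendsto_of_tendsto_of_le_of_le hlow tendsto_const_nhds
    (fun N => ?_) (fun N => ?_)
  · have hfl := Int.lt_floor_add_one (x * (s:ℝ)^N)
    have key : x - ((s:ℝ)⁻¹)^N = (x * (s:ℝ)^N - 1)/(s:ℝ)^N := by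
      rw [inv_pow]
      field_simp
    rw [key]
    exact (div_le_div_iff_of_pos_right (by positivity)).mpr (by linarith)
  · have hfl := Int.floor_le (x * (s:ℝ)^N)
    rw [div_le_iff₀ (by positivity)]
    nlinarith [Int.floor_le (x * (s:ℝ)^N)]


lemma dig_adm (hs : 2 ≤ s) {x : ℝ} (hx0 : 0 ≤ x) (hx1 : x < 1) :
    ¬ ∃ N, ∀ n ≥ N, dig s x n = s - 1 := by
  rintro ⟨N, hN⟩
  have hsum := (dig_hasSum hs hx0 hx1).tsum_eq
  have hsplit := sum_split hs (dig s x) (dig_lt hs hx0) N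
  have htail : ∑' n : ℕ, ((dig s x (n+N) : ℝ))/(s:ℝ)^((n+N)+1) = ((s:ℝ)^N)⁻¹ := by
    rw [← tsum_const_tail hs N]
    exact tsum_congr fun n => by rw [hN (n+N) (by omega)]
  rw [hsplit, htail, dig_partial hs hx0 hx1 N] at hsum
  have hfl := Int.lt_floor_add_one (x * (s:ℝ)^N)
  have hp : (0:ℝ) < (s:ℝ)^N := by positivity
  have hne : ((s:ℝ)^N) ≠ 0 := ne_of_gt hp
  field_simp at hsum
  nlinarith

lemma dig_zero_of_rat (hs : 2 ≤ s) (q N : ℕ) (x : ℝ) (hx : x = (q:ℝ) / (s:ℝ)^N) :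
    ∀ n, N ≤ n → dig s x n = 0 := by
  intro n hn
  have h0 : (0:ℝ) < s := by positivity
  have key : ∀ m, N ≤ m → ⌊x * (s:ℝ)^m⌋ = ((q * s^(m-N) : ℕ) : ℤ) := by
    intro m hm
    have hxe : x * (s:ℝ)^m = ((q * s^(m-N) : ℕ) : ℝ) := by
      rw [hx]
      push_cast
      rw [show m = N + (m - N) by omega, pow_add]
      field_simp
      rw [Nat.add_sub_cancel_left]
    rw [hxe, Int.floor_natCast]
  have h1 := key n hn
  have h2 := key (n+1) (by omega)
  have e : q * s^((n+1)-N) = s * (q * s^(n-N)) := by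
    rw [show (n+1)-N = (n-N)+1 by omega, pow_succ]
    ring
  unfold dig
  rw [h1, h2, e]
  push_cast
  simp [mul_comm]

end Stmt9

open Stmt9


/-- Paper's Lemma 8, second case: if the block permutation `θ` defining `f^s_k`
has exactly one fixed block `σ`, not equal to the constant block `s − 1`, then
the set of invariant points of `f^s_k` in `[0,1)` is the singleton consisting of
the number whose s-adic expansion is the periodic repetition of `σ`. -/
theorem stmt_9 (s k : ℕ) (hs : 2 ≤ s) (hk : 1 ≤ k)
    (θ : (Fin k → Fin s) ≃ (Fin k → Fin s))
    (hθ0 : θ (fun _ => ⟨0, by omega⟩) ≠ (fun _ => ⟨s - 1, by omega⟩))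
    (Θ : (ℕ → Fin s) → (ℕ → Fin s))
    (hΘ : ∀ (a : ℕ → Fin s) (m : ℕ) (i : Fin k),
      Θ a (k * m + (i : ℕ)) = θ (fun j => a (k * m + (j : ℕ))) i)
    (F : ℝ → ℝ)
    (hF : ∀ a : ℕ → Fin s, (¬ ∃ N, ∀ n ≥ N, (a n : ℕ) = s - 1) →
      F (∑' n : ℕ, ((a n : ℕ) : ℝ) / (s : ℝ) ^ (n + 1)) =
        ∑' n : ℕ, ((Θ a n : ℕ) : ℝ) / (s : ℝ) ^ (n + 1))
    (σ : Fin k → Fin s) (hσfix : θ σ = σ)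
    (hσuniq : ∀ b : Fin k → Fin s, θ b = b → b = σ)
    (hσne : σ ≠ (fun _ => ⟨s - 1, by omega⟩)) :
    {x ∈ Set.Ico (0 : ℝ) 1 | F x = x} =
      {∑' n : ℕ, ((σ ⟨n % k, Nat.mod_lt n (by omega)⟩ : ℕ) : ℝ) / (s : ℝ) ^ (n + 1)} := by
  have hk0 : 0 < k := hk
  ext x
  simp only [Set.mem_setOf_eq, Set.mem_singleton_iff, Set.mem_Ico]
  constructor
  · rintro ⟨⟨hx0, hx1⟩, hfix⟩
    set a : ℕ → Fin s := fun n => (⟨dig s x n, dig_lt hs hx0 n⟩ : Fin s) with hadef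
    have hadm : ¬ ∃ N, ∀ n ≥ N, (a n : ℕ) = s - 1 := dig_adm hs hx0 hx1
    have hsum : ∑' n : ℕ, ((a n : ℕ) : ℝ) / (s : ℝ) ^ (n + 1) = x :=
      (dig_hasSum hs hx0 hx1).tsum_eq
    have hFx := hF a hadm
    rw [hsum, hfix] at hFx
    -- hFx : x = ∑' n, (Θ a n)/s^(n+1)
    by_cases hΘadm : ∃ N, ∀ n ≥ N, ((Θ a n : ℕ)) = s - 1
    · exfalso
      obtain ⟨N, hN⟩ := hΘadm
      set M := k * (N + 1) with hM
      have hMN : N ≤ M := by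
        have : N + 1 ≤ k * (N + 1) := Nat.le_mul_of_pos_left _ hk0
        omega
      have hsplit := sum_split hs (fun n => (Θ a n : ℕ)) (fun n => (Θ a n).isLt) M
      have htail : ∑' n : ℕ, (((Θ a (n + M) : ℕ)) : ℝ) / (s:ℝ)^((n + M)+1)
          = ((s:ℝ)^M)⁻¹ := by
        rw [← tsum_const_tail hs M]
        exact tsum_congr fun n => by rw [hN (n + M) (by omega)]
      set q : ℕ := (∑ n ∈ Finset.range M, (Θ a n : ℕ) * s^(M-1-n)) + 1 with hq
      have hhead : ∑ n ∈ Finset.range M, (((Θ a n : ℕ)) : ℝ)/(s:ℝ)^(n+1)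
          = (((∑ n ∈ Finset.range M, (Θ a n : ℕ) * s^(M-1-n) : ℕ)) : ℝ)/(s:ℝ)^M := by
        push_cast
        rw [Finset.sum_div]
        refine Finset.sum_congr rfl (fun n hn => ?_)
        have hnM : n < M := Finset.mem_range.mp hn
        have hpow : (s:ℝ)^(M-1-n) * (s:ℝ)^(n+1) = (s:ℝ)^M := by
          rw [← pow_add]; congr 1; omega
        rw [div_eq_div_iff (by positivity) (by positivity), mul_assoc, hpow]
      have hxq : x = (q:ℝ)/(s:ℝ)^M := by
        rw [hFx, hsplit, htail, hhead, hq]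
        push_cast
        rw [← one_div, ← add_div]
      have hzero : ∀ n, M ≤ n → dig s x n = 0 := dig_zero_of_rat hs q M x hxq
      set m := N + M with hm
      have hblock0 : (fun j : Fin k => a (k * m + (j:ℕ)))
          = (fun _ => (⟨0, by omega⟩ : Fin s)) := by
        funext j
        apply Fin.ext
        show dig s x (k * m + (j:ℕ)) = _
        have hmm : m ≤ k * m := Nat.le_mul_of_pos_left _ hk0
        rw [hzero (k * m + (j:ℕ)) (by omega)]
      apply hθ0
      rw [← hblock0]
      funext i
      apply Fin.ext
      have h1 : (Θ a (k * m + (i:ℕ)) : ℕ) = s - 1 := by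
        have hmm : m ≤ k * m := Nat.le_mul_of_pos_left _ hk0
        exact hN _ (by omega)
      rw [← hΘ a m i] at *
      exact h1
    · have hkey := eq_of_sum_eq hs (fun n => ((Θ a n : ℕ))) (fun n => ((a n : ℕ)))
        (fun n => (Θ a n).isLt) (fun n => (a n).isLt) hΘadm hadm
        (by rw [hsum]; exact hFx.symm)
      have hΘa : Θ a = a := funext fun n => Fin.ext (congrFun hkey n)
      have hba : ∀ m : ℕ, (fun j : Fin k => a (k * m + (j:ℕ))) = σ := by
        intro m
        apply hσuniq
        funext i
        rw [← hΘ a m i, hΘa]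
      rw [← hsum]
      refine tsum_congr (fun n => ?_)
      have hmod : n % k < k := Nat.mod_lt n hk0
      have hdm : k * (n / k) + ((⟨n % k, hmod⟩ : Fin k) : ℕ) = n := Nat.div_add_mod n k
      have han : a n = σ ⟨n % k, hmod⟩ := by
        calc a n = a (k * (n / k) + ((⟨n % k, hmod⟩ : Fin k) : ℕ)) := by rw [hdm]
          _ = σ ⟨n % k, hmod⟩ := congrFun (hba (n / k)) ⟨n % k, hmod⟩
      rw [han]
  · rintro rfl
    set p : ℕ → Fin s := fun n => σ ⟨n % k, Nat.mod_lt n hk0⟩ with hpdef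
    have hσi : ∃ i : Fin k, (σ i : ℕ) ≠ s - 1 := by
      by_contra h
      push_neg at h
      exact hσne (funext fun i => Fin.ext (by simpa using h i))
    obtain ⟨i0, hi0⟩ := hσi
    have hpval : ∀ (m : ℕ) (i : Fin k), p (k * m + (i:ℕ)) = σ i := by
      intro m i
      show σ _ = σ i
      congr 1
      apply Fin.ext
      show (k * m + (i:ℕ)) % k = (i:ℕ)
      rw [Nat.mul_add_mod, Nat.mod_eq_of_lt i.isLt]
    have hpadm : ¬ ∃ N, ∀ n ≥ N, ((p n : ℕ)) = s - 1 := by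
      rintro ⟨N, hN⟩
      have hNk : N ≤ k * N := Nat.le_mul_of_pos_left _ hk0
      have := hN (k * N + (i0:ℕ)) (by omega)
      rw [hpval N i0] at this
      exact hi0 this
    have hblockp : ∀ m : ℕ, (fun j : Fin k => p (k * m + (j:ℕ))) = σ :=
      fun m => funext fun j => hpval m j
    have hΘp : Θ p = p := by
      funext n
      have hmod : n % k < k := Nat.mod_lt n hk0
      have hdm : k * (n / k) + ((⟨n % k, hmod⟩ : Fin k) : ℕ) = n := Nat.div_add_mod n k
      calc Θ p n = Θ p (k * (n / k) + ((⟨n % k, hmod⟩ : Fin k) : ℕ)) := by rw [hdm]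
        _ = θ (fun j => p (k * (n / k) + (j:ℕ))) ⟨n % k, hmod⟩ := hΘ p (n / k) _
        _ = σ ⟨n % k, hmod⟩ := by rw [hblockp, hσfix]
        _ = p n := rfl
    have hxval : ∑' n : ℕ, ((σ ⟨n % k, Nat.mod_lt n (by omega)⟩ : ℕ) : ℝ) / (s : ℝ) ^ (n + 1)
        = ∑' n : ℕ, ((p n : ℕ) : ℝ) / (s : ℝ) ^ (n + 1) := rfl
    have hFp := hF p hpadm
    rw [hΘp] at hFp
    refine ⟨⟨?_, ?_⟩, ?_⟩
    · exact tsum_nonneg (fun n => by positivity)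
    · rw [hxval]
      exact sum_lt_one hs (fun n => (p n : ℕ)) (fun n => (p n).isLt) hpadm
    · rw [hxval]
      exact hFp
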